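/- Let A, B, C, D ⊆ {1,…,n} be four pairwise distinct subsets such that S = conv(χ_A, χ_B, χ_C, χ_D) is a square (a 2-dimensional polytope with exactly these four points as vertices) whose diagonals are the segments conv(χ_A, χ_D) and conv(χ_B, χ_C). Then χ_A + χ_D = χ_B + χ_C; in particular A ∩ D = B ∩ C and A ∪ D = B ∪ C. -/

import Mathlib

open Set

namespace Paper

variable {P : Type*}

/-- The characteristic vector of a subset of `P`, as an element of `ℝ^P`. -/
noncomputable def chi (W : Set P) : P → ℝ := W.indicator 1

/-- A subset `S` of a poset is connected if it is non-empty and any two of its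
elements are joined by a finite sequence inside `S` of consecutively comparable
elements. -/
def ConnSub [PartialOrder P] (S : Set P) : Prop :=
  S.Nonempty ∧ ∀ x ∈ S, ∀ y ∈ S,
    Relation.ReflTransGen (fun a b : P => a ∈ S ∧ b ∈ S ∧ (a ≤ b ∨ b ≤ a)) x y

/-- Up-closure `⟨S⟩↑` of a subset of a poset. -/
def upCl [PartialOrder P] (S : Set P) : Set P := {y | ∃ x ∈ S, x ≤ y}

/-- Down-closure `⟨S⟩↓` of a subset of a poset. -/
def dnCl [PartialOrder P] (S : Set P) : Set P := {y | ∃ x ∈ S, y ≤ x}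

/-- Minimal elements of a subset of a poset. -/
def minOf [PartialOrder P] (S : Set P) : Set P := {x | x ∈ S ∧ ∀ y ∈ S, y ≤ x → y = x}

/-- Maximal elements of a subset of a poset. -/
def maxOf [PartialOrder P] (S : Set P) : Set P := {x | x ∈ S ∧ ∀ y ∈ S, x ≤ y → x = y}

/-- `A ∥ B` : every element of `A` is incomparable to every element of `B`. -/
def IsParallel [PartialOrder P] (A B : Set P) : Prop :=
  ∀ a ∈ A, ∀ b ∈ B, ¬ a ≤ b ∧ ¬ b ≤ a

/-- Order-convexity of a subset of a poset. -/
def OrdConvex [PartialOrder P] (Q : Set P) : Prop :=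
  ∀ ⦃x y z : P⦄, x ∈ Q → z ∈ Q → x ≤ y → y ≤ z → y ∈ Q

/-- A poset is `X`-free if it contains no five elements `d₁, d₂ < e < u₁, u₂` with
`d₁ ∥ d₂` and `u₁ ∥ u₂`. -/
def XFree (P : Type*) [PartialOrder P] : Prop :=
  ¬ ∃ d₁ d₂ e u₁ u₂ : P, d₁ < e ∧ d₂ < e ∧ e < u₁ ∧ e < u₂ ∧
      ¬ d₁ ≤ d₂ ∧ ¬ d₂ ≤ d₁ ∧ ¬ u₁ ≤ u₂ ∧ ¬ u₂ ≤ u₁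

/-- The order polytope of a poset. -/
def orderPolytope (P : Type*) [PartialOrder P] : Set (P → ℝ) :=
  {x | (∀ p : P, 0 ≤ x p ∧ x p ≤ 1) ∧ ∀ p q : P, p ≤ q → x p ≤ x q}

/-- The chain polytope of a finite poset. -/
def chainPolytope (P : Type*) [Fintype P] [PartialOrder P] : Set (P → ℝ) :=
  {x | (∀ p : P, 0 ≤ x p) ∧
       ∀ c : Finset P, IsChain (· ≤ ·) (↑c : Set P) → ∑ p ∈ c, x p ≤ 1}

/-- The dimension of a subset of a real vector space: the dimension of its affine span. -/
noncomputable def sdim {V : Type*} [AddCommGroup V] [Module ℝ V] (s : Set V) : ℕ :=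
  Module.finrank ℝ (vectorSpan ℝ s)

/-- `F` is a face of the polytope `K`. -/
def IsFaceOf {V : Type*} [AddCommGroup V] [Module ℝ V] (K F : Set V) : Prop :=
  IsExtreme ℝ K F

/-- `T` is a triangular 2-dimensional face of `K`. -/
def IsTriangleFaceOf {V : Type*} [AddCommGroup V] [Module ℝ V] (K T : Set V) : Prop :=
  IsFaceOf K T ∧ sdim T = 2 ∧ (Set.extremePoints ℝ T).ncard = 3

/-- `T` is a square 2-dimensional face of `K`. -/
def IsSquareFaceOf {V : Type*} [AddCommGroup V] [Module ℝ V] (K T : Set V) : Prop :=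
  IsFaceOf K T ∧ sdim T = 2 ∧ (Set.extremePoints ℝ T).ncard = 4

/-- `T` is a 2-dimensional face of `K`. -/
def IsTwoFaceOf {V : Type*} [AddCommGroup V] [Module ℝ V] (K T : Set V) : Prop :=
  IsFaceOf K T ∧ sdim T = 2

end Paper

open Paper

/-- The characteristic vector of a finite subset of `{1, …, n}`. -/
def chiF {n : ℕ} (W : Finset (Fin n)) : Fin n → ℝ := fun i => if i ∈ W then 1 else 0

section AuxStatement5

open Matrix

variable {n : ℕ}

lemma chiF_mem01 (W : Finset (Fin n)) (i : Fin n) : chiF W i = 0 ∨ chiF W i = 1 := by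
  by_cases h : i ∈ W <;> simp [chiF, h]

lemma chiF_inj {X Y : Finset (Fin n)} (h : X ≠ Y) : chiF X ≠ chiF Y := by
  intro he
  apply h
  ext i
  have h2 := congrFun he i
  by_cases hx : i ∈ X <;> by_cases hy : i ∈ Y <;>
    simp [chiF, hx, hy] at h2 ⊢ <;> norm_num at h2

/-- Key coordinatewise lemma: a crossing of two segments between 0/1 vectors
forces the sum relation. -/
lemma sum_eq01 {x y z w : Fin n → ℝ}
    (hx : ∀ i, x i = 0 ∨ x i = 1) (hy : ∀ i, y i = 0 ∨ y i = 1)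
    (hz : ∀ i, z i = 0 ∨ z i = 1) (hw : ∀ i, w i = 0 ∨ w i = 1)
    {a b c d : ℝ} (ha : 0 < a) (hb : b < 0) (hc : c < 0) (hd : 0 < d)
    (h1 : a + b + c + d = 0) (h2 : a • x + b • y + c • z + d • w = 0) :
    x + w = y + z := by
  funext i
  have h2i := congrFun h2 i
  simp only [Pi.add_apply, Pi.smul_apply, smul_eq_mul, Pi.zero_apply] at h2i
  rcases hx i with h|h <;> rcases hy i with h'|h' <;> rcases hz i with h''|h'' <;>
    rcases hw i with h'''|h''' <;>
    rw [h, h', h'', h'''] at h2i <;>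
    simp only [Pi.add_apply, h, h', h'', h'''] <;> nlinarith [h1, h2i]

lemma extreme_not_comb2 {S : Set (Fin n → ℝ)} {x y z : Fin n → ℝ}
    (hx : x ∈ Set.extremePoints ℝ S) (hyS : y ∈ S) (hzS : z ∈ S) (hxy : x ≠ y)
    {a b c : ℝ} (ha : 0 < a) (hb : b < 0) (hc : c < 0)
    (h1 : a + b + c = 0) (h2 : a • x + b • y + c • z = 0) : False := by
  have hx2 := (mem_extremePoints.1 hx).2
  have h3 : (-b) • y + (-c) • z = a • x := by linear_combination (norm := module) -h2
  have h4 : (a⁻¹ * -b) • y + (a⁻¹ * -c) • z = x := by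
    calc (a⁻¹ * -b) • y + (a⁻¹ * -c) • z = a⁻¹ • ((-b) • y + (-c) • z) := by
          rw [smul_add, smul_smul, smul_smul]
      _ = a⁻¹ • (a • x) := by rw [h3]
      _ = x := by rw [smul_smul, inv_mul_cancel₀ ha.ne', one_smul]
  have hb' : 0 < a⁻¹ * -b := mul_pos (inv_pos.2 ha) (by linarith)
  have hc' : 0 < a⁻¹ * -c := mul_pos (inv_pos.2 ha) (by linarith)
  have hsum1 : a⁻¹ * -b + a⁻¹ * -c = 1 := by
    rw [← mul_add, show -b + -c = a by linarith]
    exact inv_mul_cancel₀ ha.ne'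
  have hmem : x ∈ openSegment ℝ y z :=
    ⟨a⁻¹ * -b, a⁻¹ * -c, hb', hc', hsum1, h4⟩
  exact hxy ((hx2 y hyS z hzS hmem).1.symm)

lemma extreme_not_comb3 {S : Set (Fin n → ℝ)} (hS : Convex ℝ S) {x y z w : Fin n → ℝ}
    (hx : x ∈ Set.extremePoints ℝ S) (hyS : y ∈ S) (hzS : z ∈ S) (hwS : w ∈ S)
    (hxy : x ≠ y)
    {a b c d : ℝ} (ha : 0 < a) (hb : b < 0) (hc : c < 0) (hd : d < 0)
    (h1 : a + b + c + d = 0) (h2 : a • x + b • y + c • z + d • w = 0) : False := by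
  have hx2 := (mem_extremePoints.1 hx).2
  have he0 : c + d < 0 := by linarith
  have he0' : (c + d) ≠ 0 := he0.ne
  set q : Fin n → ℝ := ((c + d)⁻¹ * c) • z + ((c + d)⁻¹ * d) • w with hq
  have hc' : 0 < (c + d)⁻¹ * c := mul_pos_of_neg_of_neg (inv_neg''.2 he0) hc
  have hd' : 0 < (c + d)⁻¹ * d := mul_pos_of_neg_of_neg (inv_neg''.2 he0) hd
  have hqS : q ∈ S := by
    have hqseg : q ∈ segment ℝ z w :=
      ⟨(c + d)⁻¹ * c, (c + d)⁻¹ * d, hc'.le, hd'.le, by field_simp, rfl⟩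
    exact hS.segment_subset hzS hwS hqseg
  have h3 : (-b) • y + (-c) • z + (-d) • w = a • x := by
    linear_combination (norm := module) -h2
  have h4 : (a⁻¹ * -b) • y + (a⁻¹ * -(c + d)) • q = x := by
    have h5 : (a⁻¹ * -b) • y + (a⁻¹ * -(c + d)) • q
        = a⁻¹ • ((-b) • y + (-c) • z + (-d) • w) := by
      rw [hq]
      match_scalars <;> field_simp <;> ring
    rw [h5, h3, smul_smul, inv_mul_cancel₀ ha.ne', one_smul]
  have hb' : 0 < a⁻¹ * -b := mul_pos (inv_pos.2 ha) (by linarith)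
  have he' : 0 < a⁻¹ * -(c + d) := mul_pos (inv_pos.2 ha) (by linarith)
  have hsum1 : a⁻¹ * -b + a⁻¹ * -(c + d) = 1 := by
    rw [← mul_add, show -b + -(c + d) = a by linarith]
    exact inv_mul_cancel₀ ha.ne'
  have hmem : x ∈ openSegment ℝ y q :=
    ⟨a⁻¹ * -b, a⁻¹ * -(c + d), hb', he', hsum1, h4⟩
  exact hxy ((hx2 y hyS q hqS hmem).1.symm)

lemma eq_of_two {x y : Fin n → ℝ} {b c : ℝ} (hb : b ≠ 0)
    (h1 : b + c = 0) (h2 : b • x + c • y = 0) : x = y := by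
  have h3 : b • x = b • y := by linear_combination (norm := module) h2 - h1 • y
  exact smul_right_injective _ hb h3

lemma three_dep {S : Set (Fin n → ℝ)} {x y z : Fin n → ℝ}
    (hx : x ∈ Set.extremePoints ℝ S) (hy : y ∈ Set.extremePoints ℝ S)
    (hz : z ∈ Set.extremePoints ℝ S)
    (hxy : x ≠ y) (hxz : x ≠ z) (hyz : y ≠ z)
    {a b c : ℝ} (h1 : a + b + c = 0) (h2 : a • x + b • y + c • z = 0) :
    a = 0 ∧ b = 0 ∧ c = 0 := by
  have hxS := (mem_extremePoints.1 hx).1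
  have hyS := (mem_extremePoints.1 hy).1
  have hzS := (mem_extremePoints.1 hz).1
  by_cases ha : a = 0 <;> by_cases hb : b = 0 <;> by_cases hc : c = 0
  · exact ⟨ha, hb, hc⟩
  · exact absurd (by linarith : c = 0) hc
  · exact absurd (by linarith : b = 0) hb
  · -- a = 0, b ≠ 0, c ≠ 0 : y = z
    exfalso
    apply hyz
    apply eq_of_two hb (by linarith : b + c = 0)
    rw [ha] at h2
    linear_combination (norm := module) h2
  · exact absurd (by linarith : a = 0) ha
  · -- b = 0 : x = z
    exfalso
    apply hxz
    apply eq_of_two ha (by linarith : a + c = 0)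
    rw [hb] at h2
    linear_combination (norm := module) h2
  · -- c = 0 : x = y
    exfalso
    apply hxy
    apply eq_of_two ha (by linarith : a + b = 0)
    rw [hc] at h2
    linear_combination (norm := module) h2
  · exfalso
    rcases lt_or_gt_of_ne ha with ha'|ha' <;> rcases lt_or_gt_of_ne hb with hb'|hb' <;>
      rcases lt_or_gt_of_ne hc with hc'|hc'
    · linarith
    · exact extreme_not_comb2 hz hxS hyS hxz.symm hc' ha' hb' (by linarith)
        (by linear_combination (norm := module) h2)
    · exact extreme_not_comb2 hy hxS hzS hxy.symm hb' ha' hc' (by linarith)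
        (by linear_combination (norm := module) h2)
    · exact extreme_not_comb2 hx hyS hzS hxy (by linarith : (0:ℝ) < -a)
        (by linarith : -b < 0) (by linarith : -c < 0) (by linarith)
        (by linear_combination (norm := module) -h2)
    · exact extreme_not_comb2 hx hyS hzS hxy ha' hb' hc' (by linarith)
        (by linear_combination (norm := module) h2)
    · exact extreme_not_comb2 hy hxS hzS hxy.symm (by linarith : (0:ℝ) < -b)
        (by linarith : -a < 0) (by linarith : -c < 0) (by linarith)
        (by linear_combination (norm := module) -h2)
    · exact extreme_not_comb2 hz hxS hyS hxz.symm (by linarith : (0:ℝ) < -c)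
        (by linarith : -a < 0) (by linarith : -b < 0) (by linarith)
        (by linear_combination (norm := module) -h2)
    · linarith

end AuxStatement5

section AuxFace

open Matrix

variable {n : ℕ}

lemma indep_of_sdim2 (x u w : Fin n → ℝ)
    (h : sdim (convexHull ℝ ({x, x + u, x + u + w, x + w} : Set (Fin n → ℝ))) = 2) :
    ∀ a b : ℝ, a • u + b • w = 0 → a = 0 ∧ b = 0 := by
  intro a b hab
  by_contra hcon
  have key : ∃ v : Fin n → ℝ, ∀ p ∈ ({x, x + u, x + u + w, x + w} : Set (Fin n → ℝ)),
      ∃ c : ℝ, p = x + c • v := by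
    by_cases ha : a = 0
    · have hb : b ≠ 0 := by tauto
      have hw : w = 0 := by
        have hbw : b • w = 0 := by rw [ha] at hab; linear_combination (norm := module) hab
        exact (smul_eq_zero.1 hbw).resolve_left hb
      refine ⟨u, ?_⟩
      rintro p (rfl | rfl | rfl | rfl)
      exacts [⟨0, by module⟩, ⟨1, by module⟩, ⟨1, by rw [hw]; module⟩, ⟨0, by rw [hw]; module⟩]
    · have hu : u = (a⁻¹ * -b) • w := by
        have h3 : a • u = (-b) • w := by linear_combination (norm := module) hab
        rw [← smul_smul, ← h3, smul_smul, inv_mul_cancel₀ ha, one_smul]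
      refine ⟨w, ?_⟩
      rintro p (rfl | rfl | rfl | rfl)
      exacts [⟨0, by module⟩, ⟨a⁻¹ * -b, by rw [hu]⟩,
        ⟨a⁻¹ * -b + 1, by rw [hu]; module⟩, ⟨1, by module⟩]
  obtain ⟨v, hv⟩ := key
  have hle : vectorSpan ℝ ({x, x + u, x + u + w, x + w} : Set (Fin n → ℝ))
      ≤ Submodule.span ℝ {v} := by
    apply Submodule.span_le.2
    rintro z ⟨p, hp, q, hq, rfl⟩
    obtain ⟨cp, hcp⟩ := hv p hp
    obtain ⟨cq, hcq⟩ := hv q hq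
    refine Submodule.mem_span_singleton.2 ⟨cp - cq, ?_⟩
    show (cp - cq) • v = p - q
    rw [hcp, hcq]; module
  have hvs : vectorSpan ℝ (convexHull ℝ ({x, x + u, x + u + w, x + w} : Set (Fin n → ℝ)))
      = vectorSpan ℝ ({x, x + u, x + u + w, x + w} : Set (Fin n → ℝ)) := by
    rw [← direction_affineSpan, affineSpan_convexHull, direction_affineSpan]
  have h2 : (2 : ℕ) ≤ 1 := by
    unfold sdim at h
    rw [hvs] at h
    rw [← h]
    calc Module.finrank ℝ (vectorSpan ℝ ({x, x + u, x + u + w, x + w} : Set (Fin n → ℝ)))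
        ≤ Module.finrank ℝ (Submodule.span ℝ ({v} : Set (Fin n → ℝ))) :=
          Submodule.finrank_mono hle
      _ ≤ 1 := by
          by_cases hv0 : v = 0
          · subst hv0
            rw [Submodule.span_zero_singleton]
            simp
          · rw [finrank_span_singleton hv0]
  omega

lemma square_face (x u w : Fin n → ℝ)
    (hli : ∀ a b : ℝ, a • u + b • w = 0 → a = 0 ∧ b = 0) :
    IsFaceOf (convexHull ℝ ({x, x + u, x + u + w, x + w} : Set (Fin n → ℝ)))
      (segment ℝ x (x + w)) := by
  obtain ⟨v, hvw, hvu⟩ : ∃ v : Fin n → ℝ, v ⬝ᵥ w = 0 ∧ v ⬝ᵥ u < 0 := by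
    set v₀ : Fin n → ℝ := (w ⬝ᵥ w) • u - (u ⬝ᵥ w) • w with hv₀
    have hv₀w : v₀ ⬝ᵥ w = 0 := by
      rw [hv₀, sub_dotProduct, smul_dotProduct, smul_dotProduct, dotProduct_comm u w]
      simp [smul_eq_mul]
      ring
    have hne : v₀ ⬝ᵥ u ≠ 0 := by
      intro h0
      have hvv : v₀ ⬝ᵥ v₀ = 0 := by
        nth_rewrite 2 [hv₀]
        rw [dotProduct_sub, dotProduct_smul, dotProduct_smul, h0, hv₀w]
        simp
      have hv0 : v₀ = 0 := dotProduct_self_eq_zero.1 hvv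
      have hli1 := hli (w ⬝ᵥ w) (-(u ⬝ᵥ w)) (by rw [neg_smul, ← sub_eq_add_neg, ← hv₀, hv0])
      have hw0 : w = 0 := dotProduct_self_eq_zero.1 hli1.1
      have hli2 := hli 0 1 (by rw [hw0]; module)
      exact one_ne_zero hli2.2
    rcases hne.lt_or_gt with hlt | hlt
    · exact ⟨v₀, hv₀w, hlt⟩
    · exact ⟨-v₀, by rw [neg_dotProduct, hv₀w, neg_zero], by rw [neg_dotProduct]; linarith⟩
  set K : Set (Fin n → ℝ) := convexHull ℝ ({x, x + u, x + u + w, x + w} : Set (Fin n → ℝ))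
    with hK
  set c : ℝ := v ⬝ᵥ x with hc
  have hxw : v ⬝ᵥ (x + w) = c := by rw [dotProduct_add, hvw, add_zero]
  have hxu : v ⬝ᵥ (x + u) = c + v ⬝ᵥ u := by rw [dotProduct_add]
  have hxuw : v ⬝ᵥ (x + u + w) = c + v ⬝ᵥ u := by
    rw [dotProduct_add, dotProduct_add, hvw, add_zero]
  have hub : ∀ y ∈ K, v ⬝ᵥ y ≤ c := by
    intro y hy
    have hconv : Convex ℝ {y : Fin n → ℝ | v ⬝ᵥ y ≤ c} :=
      convex_halfSpace_le ⟨fun p q => dotProduct_add v p q,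
        fun r p => dotProduct_smul r v p⟩ c
    have hsub : ({x, x + u, x + u + w, x + w} : Set (Fin n → ℝ)) ⊆ {y | v ⬝ᵥ y ≤ c} := by
      rintro p (rfl | rfl | rfl | rfl) <;>
        simp only [Set.mem_setOf_eq, hxu, hxuw, hxw] <;> linarith
    exact convexHull_min hsub hconv hy
  have hdot_seg : ∀ (p₁ p₂ : Fin n → ℝ) (r : ℝ), v ⬝ᵥ p₁ = r → v ⬝ᵥ p₂ = r →
      ∀ p ∈ segment ℝ p₁ p₂, v ⬝ᵥ p = r := by
    rintro p₁ p₂ r h₁ h₂ p ⟨γ, δ, hγ, hδ, hγδ, rfl⟩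
    rw [dotProduct_add, dotProduct_smul, dotProduct_smul, h₁, h₂]
    simp only [smul_eq_mul]
    linear_combination r * hγδ
  have hFeq : segment ℝ x (x + w) = {y ∈ K | v ⬝ᵥ y = c} := by
    apply Set.Subset.antisymm
    · intro p hp
      refine ⟨?_, hdot_seg x (x + w) c rfl hxw p hp⟩
      have hss : segment ℝ x (x + w) ⊆ K := by
        rw [← convexHull_pair]
        apply convexHull_mono
        intro q hq
        simp only [Set.mem_insert_iff, Set.mem_singleton_iff] at hq ⊢
        tauto
      exact hss hp
    · rintro y ⟨hyK, hyc⟩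
      have hKJ : K = convexJoin ℝ (segment ℝ x (x + w)) (segment ℝ (x + u) (x + u + w)) := by
        rw [hK, show ({x, x + u, x + u + w, x + w} : Set (Fin n → ℝ))
            = {x, x + w} ∪ {x + u, x + u + w} by
              ext p
              simp only [Set.mem_insert_iff, Set.mem_singleton_iff, Set.mem_union]
              tauto,
          convexHull_union ⟨x, by simp⟩ ⟨x + u, by simp⟩, convexHull_pair, convexHull_pair]
      rw [hKJ] at hyK
      obtain ⟨p, hp, q, hq, ⟨γ, δ, hγ, hδ, hγδ, rfl⟩⟩ := mem_convexJoin.1 hyK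
      have hvp : v ⬝ᵥ p = c := hdot_seg x (x + w) c rfl hxw p hp
      have hvq : v ⬝ᵥ q = c + v ⬝ᵥ u :=
        hdot_seg (x + u) (x + u + w) (c + v ⬝ᵥ u) hxu hxuw q hq
      have hyc' : γ * c + δ * (c + v ⬝ᵥ u) = c := by
        rw [dotProduct_add, dotProduct_smul, dotProduct_smul, hvp, hvq] at hyc
        simpa [smul_eq_mul] using hyc
      have hδvu : δ * (v ⬝ᵥ u) = 0 := by linear_combination hyc' - c * hγδ
      have hδ0 : δ = 0 := by
        rcases mul_eq_zero.1 hδvu with h0 | h0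
        · exact h0
        · exact absurd h0 hvu.ne
      have hγ1 : γ = 1 := by linarith
      rw [hδ0, hγ1, zero_smul, add_zero, one_smul]
      exact hp
  constructor
  · rw [hFeq]; exact fun y hy => hy.1
  · intro x₁ hx₁ x₂ hx₂ p hp hpseg
    rw [hFeq] at hp ⊢
    obtain ⟨α, β, hα, hβ, hαβ, hpe⟩ := hpseg
    have h₁ : v ⬝ᵥ x₁ ≤ c := hub x₁ hx₁
    have h₂ : v ⬝ᵥ x₂ ≤ c := hub x₂ hx₂
    have hpd : α * (v ⬝ᵥ x₁) + β * (v ⬝ᵥ x₂) = c := by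
      have := hp.2
      rw [← hpe, dotProduct_add, dotProduct_smul, dotProduct_smul] at this
      simpa [smul_eq_mul] using this
    have e1 : α * (v ⬝ᵥ x₁ - c) + β * (v ⬝ᵥ x₂ - c) = 0 := by
      linear_combination hpd - c * hαβ
    have e2 : α * (v ⬝ᵥ x₁ - c) ≤ 0 :=
      mul_nonpos_of_nonneg_of_nonpos hα.le (sub_nonpos.2 h₁)
    have e3 : β * (v ⬝ᵥ x₂ - c) ≤ 0 :=
      mul_nonpos_of_nonneg_of_nonpos hβ.le (sub_nonpos.2 h₂)
    have e4 : α * (v ⬝ᵥ x₁ - c) = 0 := by linarith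
    have e5 : β * (v ⬝ᵥ x₂ - c) = 0 := by linarith
    suffices hh : x₁ ∈ {y ∈ K | v ⬝ᵥ y = c} ∧ x₂ ∈ {y ∈ K | v ⬝ᵥ y = c} from hh.1
    constructor
    · refine ⟨hx₁, ?_⟩
      rcases mul_eq_zero.1 e4 with h0 | h0
      · exact absurd h0 hα.ne'
      · linarith [sub_eq_zero.1 h0]
    · refine ⟨hx₂, ?_⟩
      rcases mul_eq_zero.1 e5 with h0 | h0
      · exact absurd h0 hβ.ne'
      · linarith [sub_eq_zero.1 h0]

end AuxFace

set_option maxHeartbeats 1600000 in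
/-- If `A, B, C, D ⊆ {1,…,n}` are pairwise distinct and
`S = conv(χ_A, χ_B, χ_C, χ_D)` is a square (2-dimensional, with exactly these four
points as vertices) whose diagonals are `conv(χ_A, χ_D)` and `conv(χ_B, χ_C)`
(i.e. these two segments are not edges (faces) of `S`), then
`χ_A + χ_D = χ_B + χ_C`; in particular `A ∩ D = B ∩ C` and `A ∪ D = B ∪ C`. -/
theorem statement5 (n : ℕ) (A B C D : Finset (Fin n))
    (hAB : A ≠ B) (hAC : A ≠ C) (hAD : A ≠ D) (hBC : B ≠ C) (hBD : B ≠ D) (hCD : C ≠ D)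
    (hdim : sdim (convexHull ℝ ({chiF A, chiF B, chiF C, chiF D} : Set (Fin n → ℝ))) = 2)
    (hvert : Set.extremePoints ℝ (convexHull ℝ ({chiF A, chiF B, chiF C, chiF D} : Set (Fin n → ℝ)))
      = {chiF A, chiF B, chiF C, chiF D})
    (hdiag₁ : ¬ IsFaceOf (convexHull ℝ ({chiF A, chiF B, chiF C, chiF D} : Set (Fin n → ℝ)))
      (segment ℝ (chiF A) (chiF D)))
    (hdiag₂ : ¬ IsFaceOf (convexHull ℝ ({chiF A, chiF B, chiF C, chiF D} : Set (Fin n → ℝ)))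
      (segment ℝ (chiF B) (chiF C))) :
    chiF A + chiF D = chiF B + chiF C ∧ A ∩ D = B ∩ C ∧ A ∪ D = B ∪ C := by
  classical
  set S : Set (Fin n → ℝ) :=
    convexHull ℝ ({chiF A, chiF B, chiF C, chiF D} : Set (Fin n → ℝ)) with hSdef
  have hconvS : Convex ℝ S := convex_convexHull ℝ _
  have hmA : chiF A ∈ S := subset_convexHull ℝ _ (by simp)
  have hmB : chiF B ∈ S := subset_convexHull ℝ _ (by simp)
  have hmC : chiF C ∈ S := subset_convexHull ℝ _ (by simp)
  have hmD : chiF D ∈ S := subset_convexHull ℝ _ (by simp)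
  have heA : chiF A ∈ Set.extremePoints ℝ S := by rw [hvert]; simp
  have heB : chiF B ∈ Set.extremePoints ℝ S := by rw [hvert]; simp
  have heC : chiF C ∈ Set.extremePoints ℝ S := by rw [hvert]; simp
  have heD : chiF D ∈ Set.extremePoints ℝ S := by rw [hvert]; simp
  have dAB := chiF_inj hAB
  have dAC := chiF_inj hAC
  have dAD := chiF_inj hAD
  have dBC := chiF_inj hBC
  have dBD := chiF_inj hBD
  have dCD := chiF_inj hCD
  -- affine dependence
  obtain ⟨a, b, c, d, hg1, hg2, hgex⟩ :
      ∃ a b c d : ℝ, a + b + c + d = 0 ∧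
        a • chiF A + b • chiF B + c • chiF C + d • chiF D = 0 ∧
        ¬(a = 0 ∧ b = 0 ∧ c = 0 ∧ d = 0) := by
    have hnAI : ¬ AffineIndependent ℝ ![chiF A, chiF B, chiF C, chiF D] := by
      intro hAI
      have hr : Set.range ![chiF A, chiF B, chiF C, chiF D]
          = ({chiF A, chiF B, chiF C, chiF D} : Set (Fin n → ℝ)) := by
        ext p
        constructor
        · rintro ⟨i, rfl⟩
          fin_cases i <;> simp
        · intro hp
          simp only [Set.mem_insert_iff, Set.mem_singleton_iff] at hp
          rcases hp with rfl | rfl | rfl | rfl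
          exacts [⟨0, rfl⟩, ⟨1, rfl⟩, ⟨2, rfl⟩, ⟨3, rfl⟩]
      have h3 := hAI.finrank_vectorSpan (by simp : Fintype.card (Fin 4) = 3 + 1)
      rw [hr] at h3
      have hvs : vectorSpan ℝ S
          = vectorSpan ℝ ({chiF A, chiF B, chiF C, chiF D} : Set (Fin n → ℝ)) := by
        rw [hSdef, ← direction_affineSpan, affineSpan_convexHull, direction_affineSpan]
      have hdim2 : Module.finrank ℝ
          (vectorSpan ℝ ({chiF A, chiF B, chiF C, chiF D} : Set (Fin n → ℝ))) = 2 := by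
        have := hdim
        unfold sdim at this
        rw [hvs] at this
        exact this
      rw [hdim2] at h3
      omega
    rw [affineIndependent_iff] at hnAI
    push_neg at hnAI
    obtain ⟨s, w0, hw1, hw2, i, his, hwi⟩ := hnAI
    set g : Fin 4 → ℝ := fun j => if j ∈ s then w0 j else 0 with hgdef
    have hsum : ∑ j, g j = 0 := by
      rw [hgdef]
      rw [Finset.sum_ite_mem, Finset.univ_inter]
      exact hw1
    have hsum2 : ∑ j, g j • (![chiF A, chiF B, chiF C, chiF D]) j = 0 := by
      have hcong : ∀ j ∈ Finset.univ, g j • (![chiF A, chiF B, chiF C, chiF D]) j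
          = if j ∈ s then w0 j • (![chiF A, chiF B, chiF C, chiF D]) j else 0 := by
        intro j _
        by_cases h : j ∈ s <;> simp [hgdef, h]
      rw [Finset.sum_congr rfl hcong, Finset.sum_ite_mem, Finset.univ_inter]
      exact hw2
    rw [Fin.sum_univ_four] at hsum hsum2
    simp only [Matrix.cons_val_zero, Matrix.cons_val_one, Matrix.head_cons,
      Matrix.cons_val_two, Matrix.tail_cons, Matrix.cons_val_three, Matrix.head_fin_const] at hsum2
    refine ⟨g 0, g 1, g 2, g 3, hsum, hsum2, ?_⟩
    rintro ⟨e0, e1, e2, e3⟩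
    apply hwi
    have hgi : g i = w0 i := by rw [hgdef]; simp [his]
    rw [← hgi]
    fin_cases i <;> assumption
  -- all coefficients are nonzero
  have hABCD : a ≠ 0 ∧ b ≠ 0 ∧ c ≠ 0 ∧ d ≠ 0 := by
    by_cases ha : a = 0
    · exfalso
      have h2' : b • chiF B + c • chiF C + d • chiF D = 0 := by
        rw [ha] at hg2; linear_combination (norm := module) hg2
      obtain ⟨e1, e2, e3⟩ := three_dep heB heC heD dBC dBD dCD (by linarith) h2'
      exact hgex ⟨ha, e1, e2, e3⟩
    by_cases hb : b = 0
    · exfalso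
      have h2' : a • chiF A + c • chiF C + d • chiF D = 0 := by
        rw [hb] at hg2; linear_combination (norm := module) hg2
      obtain ⟨e1, e2, e3⟩ := three_dep heA heC heD dAC dAD dCD (by linarith) h2'
      exact hgex ⟨e1, hb, e2, e3⟩
    by_cases hc : c = 0
    · exfalso
      have h2' : a • chiF A + b • chiF B + d • chiF D = 0 := by
        rw [hc] at hg2; linear_combination (norm := module) hg2
      obtain ⟨e1, e2, e3⟩ := three_dep heA heB heD dAB dAD dBD (by linarith) h2'
      exact hgex ⟨e1, e2, hc, e3⟩
    by_cases hd : d = 0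
    · exfalso
      have h2' : a • chiF A + b • chiF B + c • chiF C = 0 := by
        rw [hd] at hg2; linear_combination (norm := module) hg2
      obtain ⟨e1, e2, e3⟩ := three_dep heA heB heC dAB dAC dBC (by linarith) h2'
      exact hgex ⟨e1, e2, e3, hd⟩
    exact ⟨ha, hb, hc, hd⟩
  obtain ⟨ha0, hb0, hc0, hd0⟩ := hABCD
  -- the two "wrong diagonal" cases are impossible
  have wrong₁ : chiF A + chiF B = chiF C + chiF D → False := by
    intro hrel
    have hset : ({chiF A, chiF B, chiF C, chiF D} : Set (Fin n → ℝ)) =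
        {chiF A, chiF A + (chiF C - chiF A),
         chiF A + (chiF C - chiF A) + (chiF D - chiF A),
         chiF A + (chiF D - chiF A)} := by
      have e1 : chiF A + (chiF C - chiF A) = chiF C := by module
      have e2 : chiF A + (chiF D - chiF A) = chiF D := by module
      have e3 : chiF A + (chiF C - chiF A) + (chiF D - chiF A) = chiF B := by
        linear_combination (norm := module) -hrel
      rw [e3, e1, e2]
      all_goals
        ext p
        simp only [Set.mem_insert_iff, Set.mem_singleton_iff]
        tauto
    have hdim' : sdim (convexHull ℝ ({chiF A, chiF A + (chiF C - chiF A),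
        chiF A + (chiF C - chiF A) + (chiF D - chiF A),
        chiF A + (chiF D - chiF A)} : Set (Fin n → ℝ))) = 2 := by
      rw [← hset, ← hSdef]
      exact hdim
    have hface := square_face (chiF A) (chiF C - chiF A) (chiF D - chiF A)
      (indep_of_sdim2 _ _ _ hdim')
    rw [← hset] at hface
    have e2 : chiF A + (chiF D - chiF A) = chiF D := by module
    rw [e2] at hface
    exact hdiag₁ (by rw [hSdef]; exact hface)
  have wrong₂ : chiF A + chiF C = chiF B + chiF D → False := by
    intro hrel
    have hset : ({chiF A, chiF B, chiF C, chiF D} : Set (Fin n → ℝ)) =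
        {chiF A, chiF A + (chiF B - chiF A),
         chiF A + (chiF B - chiF A) + (chiF D - chiF A),
         chiF A + (chiF D - chiF A)} := by
      have e1 : chiF A + (chiF B - chiF A) = chiF B := by module
      have e2 : chiF A + (chiF D - chiF A) = chiF D := by module
      have e3 : chiF A + (chiF B - chiF A) + (chiF D - chiF A) = chiF C := by
        linear_combination (norm := module) -hrel
      rw [e3, e1, e2]
      all_goals
        ext p
        simp only [Set.mem_insert_iff, Set.mem_singleton_iff]
        tauto
    have hdim' : sdim (convexHull ℝ ({chiF A, chiF A + (chiF B - chiF A),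
        chiF A + (chiF B - chiF A) + (chiF D - chiF A),
        chiF A + (chiF D - chiF A)} : Set (Fin n → ℝ))) = 2 := by
      rw [← hset, ← hSdef]
      exact hdim
    have hface := square_face (chiF A) (chiF B - chiF A) (chiF D - chiF A)
      (indep_of_sdim2 _ _ _ hdim')
    rw [← hset] at hface
    have e2 : chiF A + (chiF D - chiF A) = chiF D := by module
    rw [e2] at hface
    exact hdiag₁ (by rw [hSdef]; exact hface)
  have m01A := chiF_mem01 A
  have m01B := chiF_mem01 B
  have m01C := chiF_mem01 C
  have m01D := chiF_mem01 D
  have hmain : chiF A + chiF D = chiF B + chiF C := by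
    rcases lt_or_gt_of_ne ha0 with ha | ha <;> rcases lt_or_gt_of_ne hb0 with hb | hb <;>
      rcases lt_or_gt_of_ne hc0 with hc | hc <;> rcases lt_or_gt_of_ne hd0 with hd | hd
    -- (-,-,-,-)
    · exact absurd hg1 (by intro h; linarith)
    -- (-,-,-,+)
    · exact absurd (extreme_not_comb3 hconvS heD hmA hmB hmC dAD.symm hd ha hb hc
        (by linarith) (by linear_combination (norm := module) hg2)) not_false
    -- (-,-,+,-)
    · exact absurd (extreme_not_comb3 hconvS heC hmA hmB hmD dAC.symm hc ha hb hd
        (by linarith) (by linear_combination (norm := module) hg2)) not_false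
    -- (-,-,+,+) : (-a,-b,-c,-d) = (+,+,-,-) : A+B = C+D
    · exact absurd (wrong₁ (sum_eq01 m01A m01C m01D m01B (by linarith : (0:ℝ) < -a)
        (by linarith : -c < 0) (by linarith : -d < 0) (by linarith : (0:ℝ) < -b)
        (by linarith) (by linear_combination (norm := module) -hg2))) not_false
    -- (-,+,-,-)
    · exact absurd (extreme_not_comb3 hconvS heB hmA hmC hmD dAB.symm hb ha hc hd
        (by linarith) (by linear_combination (norm := module) hg2)) not_false
    -- (-,+,-,+) : (-a,-b,-c,-d) = (+,-,+,-) : A+C = B+D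
    · exact absurd (wrong₂ (sum_eq01 m01A m01B m01D m01C (by linarith : (0:ℝ) < -a)
        (by linarith : -b < 0) (by linarith : -d < 0) (by linarith : (0:ℝ) < -c)
        (by linarith) (by linear_combination (norm := module) -hg2))) not_false
    -- (-,+,+,-) : (-a,-b,-c,-d) = (+,-,-,+) : GOOD
    · exact sum_eq01 m01A m01B m01C m01D (by linarith : (0:ℝ) < -a)
        (by linarith : -b < 0) (by linarith : -c < 0) (by linarith : (0:ℝ) < -d)
        (by linarith) (by linear_combination (norm := module) -hg2)
    -- (-,+,+,+)
    · exact absurd (extreme_not_comb3 hconvS heA hmB hmC hmD dAB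
        (by linarith : (0:ℝ) < -a) (by linarith : -b < 0) (by linarith : -c < 0)
        (by linarith : -d < 0) (by linarith)
        (by linear_combination (norm := module) -hg2)) not_false
    -- (+,-,-,-)
    · exact absurd (extreme_not_comb3 hconvS heA hmB hmC hmD dAB ha hb hc hd
        (by linarith) (by linear_combination (norm := module) hg2)) not_false
    -- (+,-,-,+) : GOOD
    · exact sum_eq01 m01A m01B m01C m01D ha hb hc hd hg1
        (by linear_combination (norm := module) hg2)
    -- (+,-,+,-) : A+C = B+D
    · exact absurd (wrong₂ (sum_eq01 m01A m01B m01D m01C ha hb hd hc (by linarith)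
        (by linear_combination (norm := module) hg2))) not_false
    -- (+,-,+,+)
    · exact absurd (extreme_not_comb3 hconvS heB hmA hmC hmD dAB.symm
        (by linarith : (0:ℝ) < -b) (by linarith : -a < 0) (by linarith : -c < 0)
        (by linarith : -d < 0) (by linarith)
        (by linear_combination (norm := module) -hg2)) not_false
    -- (+,+,-,-) : A+B = C+D
    · exact absurd (wrong₁ (sum_eq01 m01A m01C m01D m01B ha hc hd hb (by linarith)
        (by linear_combination (norm := module) hg2))) not_false
    -- (+,+,-,+)
    · exact absurd (extreme_not_comb3 hconvS heC hmA hmB hmD dAC.symm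
        (by linarith : (0:ℝ) < -c) (by linarith : -a < 0) (by linarith : -b < 0)
        (by linarith : -d < 0) (by linarith)
        (by linear_combination (norm := module) -hg2)) not_false
    -- (+,+,+,-)
    · exact absurd (extreme_not_comb3 hconvS heD hmA hmB hmC dAD.symm
        (by linarith : (0:ℝ) < -d) (by linarith : -a < 0) (by linarith : -b < 0)
        (by linarith : -c < 0) (by linarith)
        (by linear_combination (norm := module) -hg2)) not_false
    -- (+,+,+,+)
    · exact absurd hg1 (by intro h; linarith)
  refine ⟨hmain, ?_, ?_⟩
  · ext i
    have h := congrFun hmain i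
    simp only [Pi.add_apply, chiF] at h
    simp only [Finset.mem_inter]
    by_cases hA : i ∈ A <;> by_cases hB : i ∈ B <;> by_cases hC : i ∈ C <;>
      by_cases hD : i ∈ D <;> simp only [hA, hB, hC, hD, if_true, if_false] at h <;>
      norm_num at h <;> tauto
  · ext i
    have h := congrFun hmain i
    simp only [Pi.add_apply, chiF] at h
    simp only [Finset.mem_union]
    by_cases hA : i ∈ A <;> by_cases hB : i ∈ B <;> by_cases hC : i ∈ C <;>
      by_cases hD : i ∈ D <;> simp only [hA, hB, hC, hD, if_true, if_false] at h <;>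
      norm_num at h <;> tauto
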